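/- For every initial list and every request sequence σ, under the full cost model, min(MTFO(σ), MTFE(σ)) ≤ 2·OPT(σ); that is, on every input at least one of MTFO and MTFE has cost at most twice the optimal offline cost. -/

import Mathlib

namespace ListUpdate

variable {α : Type} [DecidableEq α]

/-- Swap the adjacent items at (0-based) positions `i` and `i+1`. -/
def adjSwap (L : List α) (i : ℕ) : List α :=
  L.take i ++ (match L.drop i with
    | a :: b :: t => b :: a :: t
    | t => t)

/-- An offline action for one request: a sequence of paid exchanges performed
before the access (each given by the position of the swapped pair), and the
target position for the free exchange performed after the access. -/
structure Action (α : Type) where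
  paid : List ℕ
  target : ℕ

def doPaid (L : List α) (ps : List ℕ) : List α := ps.foldl adjSwap L

/-- Move item `r` (for free) to position `min j (current position)`,
i.e. to any position not farther from the front. -/
def freeMove (L : List α) (r : α) (j : ℕ) : List α :=
  (L.erase r).insertIdx (min j (L.idxOf r)) r

/-- Cost of one offline step: one unit per paid exchange plus the access cost;
`c = 1` gives the full cost model, `c = 0` the partial cost model. -/
def stepCost (c : ℕ) (L : List α) (r : α) (a : Action α) : ℕ :=
  a.paid.length + ((doPaid L a.paid).idxOf r + c)

def stepList (L : List α) (r : α) (a : Action α) : List α :=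
  freeMove (doPaid L a.paid) r a.target

/-- Total cost of serving the request sequence with the given actions. -/
def serveCost (c : ℕ) : List α → List α → List (Action α) → ℕ
  | _, [], _ => 0
  | _, _ :: _, [] => 0
  | L, r :: σ, a :: as => stepCost c L r a + serveCost c (stepList L r a) σ as

/-- The list configuration after serving the requests with the given actions. -/
def serveList : List α → List α → List (Action α) → List α
  | L, [], _ => L
  | L, _ :: _, [] => L
  | L, r :: σ, a :: as => serveList (stepList L r a) σ as

/-- `optCost c L σ` : the optimal offline cost of serving `σ` starting from list `L`. -/
noncomputable def optCost (c : ℕ) (L : List α) (σ : List α) : ℕ :=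
  sInf { n | ∃ as : List (Action α), as.length = σ.length ∧ serveCost c L σ as = n }

/-- Cost of an MTF2 (move-to-front-every-other-access) algorithm: it keeps one bit
per item; on each request the requested item's bit is flipped and the item is moved
to the front exactly when the bit becomes `false` (i.e. 0). -/
def mtf2Cost (c : ℕ) : (α → Bool) → List α → List α → ℕ
  | _, _, [] => 0
  | bits, L, r :: σ =>
    (L.idxOf r + c) +
      mtf2Cost c (Function.update bits r (!bits r))
        (if !bits r then L else r :: L.erase r) σ

/-- Final list of an MTF2 algorithm. -/
def mtf2List : (α → Bool) → List α → List α → List α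
  | _, L, [] => L
  | bits, L, r :: σ =>
      mtf2List (Function.update bits r (!bits r))
        (if !bits r then L else r :: L.erase r) σ

/-- MTFO moves the requested item to the front on every odd request to it:
this is MTF2 with all bits initially 1. -/
def mtfoCost (c : ℕ) (L σ : List α) : ℕ := mtf2Cost c (fun _ => true) L σ

/-- MTFE moves the requested item to the front on every even request to it:
this is MTF2 with all bits initially 0. -/
def mtfeCost (c : ℕ) (L σ : List α) : ℕ := mtf2Cost c (fun _ => false) L σ

/-- One step of TS (Timestamp). `h` is the list of previous requests, most recent
first. The requested item `x` is inserted in front of the first item of the list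
that precedes `x` and was requested at most once since the last request to `x`;
if there is no such item, or this is the first request to `x`, nothing moves. -/
def tsStep (h : List α) (L : List α) (x : α) : List α :=
  if x ∈ h then
    let cnt : α → ℕ := fun z => (h.takeWhile (fun w => decide (w ≠ x))).count z
    let pre := L.takeWhile (fun w => decide (w ≠ x))
    let keep := pre.takeWhile (fun z => decide (2 ≤ cnt z))
    keep ++ x :: (pre.drop keep.length ++ (L.dropWhile (fun w => decide (w ≠ x))).tail)
  else L

/-- Cost of TS; `h` is the history of previous requests, most recent first
(initially `[]`). -/
def tsCost (c : ℕ) : List α → List α → List α → ℕ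
  | _, _, [] => 0
  | h, L, r :: σ => (L.idxOf r + c) + tsCost c (r :: h) (tsStep h L r) σ

/-- An online algorithm with advice: its action may depend on the advice tape and
on the sequence of requests seen so far (ending with the current request). -/
def OnlineAdviceAlg (α : Type) := (ℕ → Bool) → List α → Action α

/-- Total cost of running the online algorithm `A` with advice tape `φ`:
`past` is the reversed-free list of requests served so far (oldest first). -/
def runAdvCost (c : ℕ) (A : OnlineAdviceAlg α) (φ : ℕ → Bool) :
    List α → List α → List α → ℕ
  | _, _, [] => 0
  | past, L, r :: σ =>
      stepCost c L r (A φ (past ++ [r])) +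
        runAdvCost c A φ (past ++ [r]) (stepList L r (A φ (past ++ [r]))) σ

/-- `A`, run on `σ` with tape `φ`, reads at most the first `k` bits of advice:
its behaviour on every step of `σ` is unchanged if the tape is modified
beyond position `k`. -/
def UsesAdvice (A : OnlineAdviceAlg α) (φ : ℕ → Bool) (σ : List α) (k : ℕ) : Prop :=
  ∀ ψ : ℕ → Bool, (∀ i < k, ψ i = φ i) →
    ∀ t, 0 < t → t ≤ σ.length → A ψ (σ.take t) = A φ (σ.take t)

end ListUpdate

open ListUpdate

section PotentialAux

variable {α : Type} [DecidableEq α]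

/-- `y` is strictly before `x` in list `M`. -/
def bef (M : List α) (y x : α) : Bool := decide (M.idxOf y < M.idxOf x)

/-- The pairwise potential table. -/
def phiT (o e s bx by' : Bool) : ℕ :=
  if o = e then (if s = o then 0 else 4)
  else if o then 1 + (if bx then 0 else 1) + (if by' then 1 else 0)
  else 1 + (if bx then 1 else 0) + (if by' then 0 else 1)

lemma phiT_le : ∀ o e s bx by', phiT o e s bx by' ≤ 4 := by decide

lemma phiT_diag : ∀ o b1 b2, phiT o o o b1 b2 = 0 := by
  intro o b1 b2; simp [phiT]

lemma phiT_step : ∀ o e s br bY s2 : Bool, (s2 = true → s = true) →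
    2 * (if o then 1 else 0) + 2 * (if e then 1 else 0)
      + phiT (if br then false else o) (if br then e else false) s2 (!br) bY
      + phiT (!(if br then false else o)) (!(if br then e else false)) (!s2) bY (!br)
    ≤ 8 * (if s then 1 else 0) + phiT o e s br bY + phiT (!o) (!e) (!s) bY br := by
  decide

def psiP (LO LE LS : List α) (b : α → Bool) (x y : α) : ℕ :=
  phiT (bef LO y x) (bef LE y x) (bef LS y x) (b x) (b y)

def pot (T : Finset α) (LO LE LS : List α) (b : α → Bool) : ℕ :=
  ∑ x ∈ T, ∑ y ∈ T.erase x, psiP LO LE LS b x y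

lemma bef_irrefl (M : List α) (x : α) : bef M x x = false := by simp [bef]

lemma bef_not {M : List α} (h : M.Nodup) {x y : α} (hx : x ∈ M) (hy : y ∈ M)
    (hxy : x ≠ y) : bef M x y = !bef M y x := by
  have hne : M.idxOf x ≠ M.idxOf y := fun hc => hxy ((List.idxOf_inj hx).1 hc)
  unfold bef
  rcases Nat.lt_or_ge (M.idxOf x) (M.idxOf y) with h1 | h1
  · simp [h1, Nat.le_of_lt h1, not_lt.2 (Nat.le_of_lt h1)]
  · have h2 : M.idxOf y < M.idxOf x := lt_of_le_of_ne h1 (Ne.symm hne)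
    simp [h2, not_lt.2 (Nat.le_of_lt h2)]

lemma bef_cons_ne {M : List α} {c x y : α} (hx : x ≠ c) (hy : y ≠ c) :
    bef (c :: M) y x = bef M y x := by
  unfold bef
  rw [List.idxOf_cons_ne _ (Ne.symm hx), List.idxOf_cons_ne _ (Ne.symm hy)]
  simp [Nat.succ_lt_succ_iff]

lemma bef_erase {M : List α} {r x y : α} (hx : x ≠ r) (hy : y ≠ r) :
    bef (M.erase r) y x = bef M y x := by
  induction M with
  | nil => simp
  | cons c M ih =>
    by_cases hc : c = r
    · subst hc
      rw [List.erase_cons_head]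
      exact (bef_cons_ne hx hy).symm
    · rw [List.erase_cons_tail (by simpa using hc)]
      by_cases hxc : x = c
      · subst hxc
        unfold bef
        simp [List.idxOf_cons_self]
      · by_cases hyc : y = c
        · subst hyc
          unfold bef
          rw [List.idxOf_cons_self, List.idxOf_cons_self,
            List.idxOf_cons_ne _ (Ne.symm hxc), List.idxOf_cons_ne _ (Ne.symm hxc)]
          simp
        · rw [bef_cons_ne hxc hyc, bef_cons_ne hxc hyc, ih]

lemma bef_cons_head (M : List α) (r y : α) : bef (r :: M) y r = false := by
  unfold bef
  simp [List.idxOf_cons_self]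

end PotentialAux

section ListOps

variable {α : Type} [DecidableEq α]

lemma mem_take_idx {l : List α} {z : α} (hz : z ∈ l) (k : ℕ) :
    z ∈ l.take k ↔ l.idxOf z < k := by
  induction l generalizing k with
  | nil => simp at hz
  | cons c l ih =>
    cases k with
    | zero => simp
    | succ k =>
      by_cases hzc : z = c
      · subst hzc
        simp [List.idxOf_cons_self]
      · rw [List.take_succ_cons]
        simp only [List.mem_cons, hzc, false_or, List.idxOf_cons_ne _ (Ne.symm hzc)]
        rw [ih (by simpa [hzc] using hz)]
        omega

lemma indexOf_take {l : List α} {z : α} {k : ℕ} (hz : z ∈ l.take k) :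
    (l.take k).idxOf z = l.idxOf z := by
  conv_rhs => rw [← List.take_append_drop k l]
  rw [List.idxOf_append_of_mem hz]

lemma insertIdx_eq_take_cons_drop {l : List α} {k : ℕ} (a : α) (hk : k ≤ l.length) :
    l.insertIdx k a = l.take k ++ a :: l.drop k := by
  induction k generalizing l with
  | zero => simp
  | succ k ih =>
    cases l with
    | nil => simp at hk
    | cons c l =>
      rw [List.insertIdx_succ_cons, List.take_succ_cons, List.drop_succ_cons,
        ih (Nat.le_of_succ_le_succ hk)]
      rfl

lemma indexOf_insertIdx_of_mem {l : List α} {k : ℕ} {a z : α} (hk : k ≤ l.length)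
    (ha : a ∉ l) (hz : z ∈ l) :
    (l.insertIdx k a).idxOf z =
      if l.idxOf z < k then l.idxOf z else l.idxOf z + 1 := by
  rw [insertIdx_eq_take_cons_drop a hk]
  by_cases hzt : z ∈ l.take k
  · rw [List.idxOf_append_of_mem hzt, indexOf_take hzt, if_pos ((mem_take_idx hz k).1 hzt)]
  · have hza : z ≠ a := fun h => ha (h ▸ hz)
    rw [List.idxOf_append_of_notMem hzt, List.idxOf_cons_ne _ (Ne.symm hza)]
    have hzd : z ∈ l.drop k := by
      have := List.take_append_drop k l
      rw [← this] at hz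
      rcases List.mem_append.1 hz with h | h
      · exact absurd h hzt
      · exact h
    have hlen : (l.take k).length = k := by
      rw [List.length_take]; omega
    have hidx : l.idxOf z = k + (l.drop k).idxOf z := by
      conv_lhs => rw [← List.take_append_drop k l]
      rw [List.idxOf_append_of_notMem hzt, hlen]
    rw [hlen, if_neg (by omega)]
    omega

lemma indexOf_insertIdx_self {l : List α} {k : ℕ} {a : α} (hk : k ≤ l.length)
    (ha : a ∉ l) : (l.insertIdx k a).idxOf a = k := by
  rw [insertIdx_eq_take_cons_drop a hk]
  have hat : a ∉ l.take k := fun h => ha (List.mem_of_mem_take h)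
  rw [List.idxOf_append_of_notMem hat, List.idxOf_cons_self]
  rw [List.length_take]; omega

lemma bef_insertIdx_other {l : List α} {k : ℕ} {a x y : α} (hk : k ≤ l.length)
    (ha : a ∉ l) (hx : x ∈ l) (hy : y ∈ l) :
    bef (l.insertIdx k a) y x = bef l y x := by
  unfold bef
  rw [indexOf_insertIdx_of_mem hk ha hx, indexOf_insertIdx_of_mem hk ha hy]
  split_ifs <;> exact decide_eq_decide.2 (by omega)

lemma bef_insertIdx_self {l : List α} {k : ℕ} {a y : α} (hk : k ≤ l.length)
    (ha : a ∉ l) (hy : y ∈ l) :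
    bef (l.insertIdx k a) y a = decide (l.idxOf y < k) := by
  unfold bef
  rw [indexOf_insertIdx_of_mem hk ha hy, indexOf_insertIdx_self hk ha]
  split_ifs <;> exact decide_eq_decide.2 (by omega)

lemma indexOf_erase_lt_iff {M : List α} {r y : α} (hyr : y ≠ r) :
    ((M.erase r).idxOf y < M.idxOf r ↔ M.idxOf y < M.idxOf r) := by
  induction M with
  | nil => simp
  | cons c M ih =>
    by_cases hc : c = r
    · subst hc
      rw [List.erase_cons_head, List.idxOf_cons_self]
      omega
    · rw [List.erase_cons_tail (by simpa using hc), List.idxOf_cons_ne _ hc]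
      by_cases hyc : y = c
      · subst hyc
        rw [List.idxOf_cons_self, List.idxOf_cons_self]
      · rw [List.idxOf_cons_ne _ (Ne.symm hyc), List.idxOf_cons_ne _ (Ne.symm hyc)]
        have := ih
        omega

end ListOps

section MoveLemmas

variable {α : Type} [DecidableEq α]

/-! ### freeMove -/

lemma freeMove_min_le {M : List α} {r : α} (hr : r ∈ M) (j : ℕ) :
    min j (M.idxOf r) ≤ (M.erase r).length := by
  have h1 : M.idxOf r < M.length := List.idxOf_lt_length_iff.2 hr
  have h2 : (M.erase r).length + 1 = M.length := List.length_erase_add_one hr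
  omega

lemma freeMove_perm {M : List α} {r : α} (h : M.Nodup) (hr : r ∈ M) (j : ℕ) :
    (freeMove M r j).Perm M := by
  unfold freeMove
  rw [insertIdx_eq_take_cons_drop r (freeMove_min_le hr j)]
  exact (List.perm_middle.trans (by rw [List.take_append_drop]; exact (List.perm_cons_erase hr).symm))

lemma freeMove_nodup {M : List α} {r : α} (h : M.Nodup) (hr : r ∈ M) (j : ℕ) :
    (freeMove M r j).Nodup := ((freeMove_perm h hr j).nodup_iff).2 h

lemma freeMove_toFinset {M : List α} {r : α} (h : M.Nodup) (hr : r ∈ M) (j : ℕ) :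
    (freeMove M r j).toFinset = M.toFinset :=
  List.toFinset_eq_of_perm _ _ (freeMove_perm h hr j)

lemma bef_freeMove_other {M : List α} {r x y : α} (h : M.Nodup) (hr : r ∈ M)
    (hx : x ∈ M) (hy : y ∈ M) (hxr : x ≠ r) (hyr : y ≠ r) (j : ℕ) :
    bef (freeMove M r j) y x = bef M y x := by
  unfold freeMove
  rw [bef_insertIdx_other (freeMove_min_le hr j) (by simp [List.Nodup.mem_erase_iff h])
    ((List.mem_erase_of_ne hxr).2 hx) ((List.mem_erase_of_ne hyr).2 hy)]
  exact bef_erase hxr hyr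

lemma bef_freeMove_req {M : List α} {r y : α} (h : M.Nodup) (hr : r ∈ M)
    (hy : y ∈ M) (hyr : y ≠ r) (j : ℕ) :
    bef (freeMove M r j) y r = true → bef M y r = true := by
  unfold freeMove
  rw [bef_insertIdx_self (freeMove_min_le hr j) (by simp [List.Nodup.mem_erase_iff h])
    ((List.mem_erase_of_ne hyr).2 hy)]
  intro hlt
  have h1 : (M.erase r).idxOf y < M.idxOf r := by
    have := of_decide_eq_true hlt
    omega
  have h2 := (indexOf_erase_lt_iff (M := M) hyr).1 h1
  unfold bef
  exact decide_eq_true h2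

/-! ### move-to-front -/

lemma mtf_nodup {M : List α} {r : α} (h : M.Nodup) : (r :: M.erase r).Nodup := by
  refine List.nodup_cons.2 ⟨?_, h.erase r⟩
  intro hc
  exact absurd ((List.Nodup.mem_erase_iff h).1 hc).1 (by simp)

lemma mtf_toFinset {M : List α} {r : α} (hr : r ∈ M) :
    (r :: M.erase r).toFinset = M.toFinset :=
  (List.toFinset_eq_of_perm _ _ (List.perm_cons_erase hr)).symm

lemma bef_mtf_other {M : List α} {r x y : α} (hxr : x ≠ r) (hyr : y ≠ r) :
    bef (r :: M.erase r) y x = bef M y x := by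
  rw [bef_cons_ne hxr hyr]
  exact bef_erase hxr hyr

/-! ### adjSwap -/

lemma adjSwap_cases (M : List α) (i : ℕ) :
    adjSwap M i = M ∨ ∃ a b, M = M.take i ++ a :: b :: M.drop (i + 2) ∧
      adjSwap M i = M.take i ++ b :: a :: M.drop (i + 2) := by
  rcases hd : M.drop i with - | ⟨a, t⟩
  · left
    have hM : M = M.take i ++ ([] : List α) := by
      conv_lhs => rw [← List.take_append_drop i M, hd]
    rw [adjSwap, hd]
    exact hM.symm
  · rcases ht : t with - | ⟨b, t'⟩
    · left
      have hM : M = M.take i ++ [a] := by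
        conv_lhs => rw [← List.take_append_drop i M, hd, ht]
      rw [adjSwap, hd, ht]
      exact hM.symm
    · right
      have h2 : M.drop (i + 2) = t' := by
        rw [← List.drop_drop, hd, ht]
        rfl
      refine ⟨a, b, ?_, ?_⟩
      · rw [h2]
        conv_lhs => rw [← List.take_append_drop i M, hd, ht]
      · rw [adjSwap, hd, ht, h2]

lemma idx_append_cons_cons (A B : List α) (u v z : α) (hu : u ∉ A) (hv : v ∉ A)
    (huv : u ≠ v) :
    (A ++ u :: v :: B).idxOf z =
      if z ∈ A then A.idxOf z else if z = u then A.length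
      else if z = v then A.length + 1 else A.length + 2 + B.idxOf z := by
  by_cases hzA : z ∈ A
  · rw [List.idxOf_append_of_mem hzA, if_pos hzA]
  · rw [List.idxOf_append_of_notMem hzA, if_neg hzA]
    by_cases hzu : z = u
    · subst hzu
      simp
    · rw [if_neg hzu, List.idxOf_cons_ne _ (fun h => hzu h.symm)]
      by_cases hzv : z = v
      · subst hzv
        simp
      · rw [if_neg hzv, List.idxOf_cons_ne _ (fun h => hzv h.symm)]
        omega

lemma swap_nodup_facts {A B : List α} {a b : α} (hnd : (A ++ a :: b :: B).Nodup) :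
    a ∉ A ∧ b ∉ A ∧ a ≠ b := by
  rcases List.nodup_append.1 hnd with ⟨-, hnd2, hdisj⟩
  refine ⟨fun h => hdisj _ h _ (by simp) rfl, fun h => hdisj _ h _ (by simp) rfl, ?_⟩
  intro h
  subst h
  simp at hnd2

lemma bef_swap_other {A B : List α} {a b : α} (hnd : (A ++ a :: b :: B).Nodup)
    {x y : α} (hx : x ∈ A ++ a :: b :: B) (hy : y ∈ A ++ a :: b :: B)
    (hne : ¬(x = a ∧ y = b)) (hne' : ¬(x = b ∧ y = a)) :
    bef (A ++ b :: a :: B) y x = bef (A ++ a :: b :: B) y x := by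
  obtain ⟨ha, hb, hab⟩ := swap_nodup_facts hnd
  have hMa : (A ++ a :: b :: B).idxOf a = A.length := by
    rw [idx_append_cons_cons A B a b a ha hb hab, if_neg ha, if_pos rfl]
  have hMb : (A ++ a :: b :: B).idxOf b = A.length + 1 := by
    rw [idx_append_cons_cons A B a b b ha hb hab, if_neg hb, if_neg (Ne.symm hab), if_pos rfl]
  have hNa : (A ++ b :: a :: B).idxOf a = A.length + 1 := by
    rw [idx_append_cons_cons A B b a a hb ha (Ne.symm hab), if_neg ha, if_neg hab, if_pos rfl]
  have hNb : (A ++ b :: a :: B).idxOf b = A.length := by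
    rw [idx_append_cons_cons A B b a b hb ha (Ne.symm hab), if_neg hb, if_pos rfl]
  have hIdx : ∀ z, z ∈ A ++ a :: b :: B → z ≠ a → z ≠ b →
      (A ++ b :: a :: B).idxOf z = (A ++ a :: b :: B).idxOf z ∧
      ((A ++ a :: b :: B).idxOf z < A.length ∨
        A.length + 2 ≤ (A ++ a :: b :: B).idxOf z) := by
    intro z hz hza hzb
    rw [idx_append_cons_cons A B a b z ha hb hab,
      idx_append_cons_cons A B b a z hb ha (Ne.symm hab)]
    by_cases hzA : z ∈ A
    · rw [if_pos hzA, if_pos hzA]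
      exact ⟨rfl, Or.inl (List.idxOf_lt_length_iff.2 hzA)⟩
    · rw [if_neg hzA, if_neg hzA, if_neg hza, if_neg hzb, if_neg hzb, if_neg hza]
      exact ⟨rfl, Or.inr (by omega)⟩
  have gx1 : x = a → (A ++ b :: a :: B).idxOf x = A.length + 1 ∧
      (A ++ a :: b :: B).idxOf x = A.length := by
    intro h; rw [h]; exact ⟨hNa, hMa⟩
  have gx2 : x = b → (A ++ b :: a :: B).idxOf x = A.length ∧
      (A ++ a :: b :: B).idxOf x = A.length + 1 := by
    intro h; rw [h]; exact ⟨hNb, hMb⟩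
  have gy1 : y = a → (A ++ b :: a :: B).idxOf y = A.length + 1 ∧
      (A ++ a :: b :: B).idxOf y = A.length := by
    intro h; rw [h]; exact ⟨hNa, hMa⟩
  have gy2 : y = b → (A ++ b :: a :: B).idxOf y = A.length ∧
      (A ++ a :: b :: B).idxOf y = A.length + 1 := by
    intro h; rw [h]; exact ⟨hNb, hMb⟩
  by_cases hxa : x = a
  · obtain ⟨p1, p2⟩ := gx1 hxa
    by_cases hyb : y = b
    · exact absurd ⟨hxa, hyb⟩ hne
    · by_cases hya : y = a
      · obtain ⟨q1, q2⟩ := gy1 hya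
        unfold bef; rw [decide_eq_decide]; omega
      · obtain ⟨q1, q2⟩ := hIdx y hy hya hyb
        unfold bef; rw [decide_eq_decide]; omega
  · by_cases hxb : x = b
    · obtain ⟨p1, p2⟩ := gx2 hxb
      by_cases hya : y = a
      · exact absurd ⟨hxb, hya⟩ hne'
      · by_cases hyb : y = b
        · obtain ⟨q1, q2⟩ := gy2 hyb
          unfold bef; rw [decide_eq_decide]; omega
        · obtain ⟨q1, q2⟩ := hIdx y hy hya hyb
          unfold bef; rw [decide_eq_decide]; omega
    · obtain ⟨p1, p2⟩ := hIdx x hx hxa hxb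
      by_cases hya : y = a
      · obtain ⟨q1, q2⟩ := gy1 hya
        unfold bef; rw [decide_eq_decide]; omega
      · by_cases hyb : y = b
        · obtain ⟨q1, q2⟩ := gy2 hyb
          unfold bef; rw [decide_eq_decide]; omega
        · obtain ⟨q1, q2⟩ := hIdx y hy hya hyb
          obtain ⟨r1, r2⟩ := hIdx x hx hxa hxb
          unfold bef; rw [decide_eq_decide]; omega

lemma adjSwap_perm (M : List α) (i : ℕ) : (adjSwap M i).Perm M := by
  rcases adjSwap_cases M i with h | ⟨a, b, hM, hN⟩
  · rw [h]
  · rw [hN]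
    conv_rhs => rw [hM]
    exact List.Perm.append_left _ (List.Perm.swap a b _)

lemma adjSwap_nodup {M : List α} (h : M.Nodup) (i : ℕ) : (adjSwap M i).Nodup :=
  ((adjSwap_perm M i).nodup_iff).2 h

lemma adjSwap_toFinset (M : List α) (i : ℕ) : (adjSwap M i).toFinset = M.toFinset :=
  List.toFinset_eq_of_perm _ _ (adjSwap_perm M i)

end MoveLemmas

section PotentialSteps

variable {α : Type} [DecidableEq α]

lemma indexOf_eq_sum {M : List α} (h : M.Nodup) {r : α} (hr : r ∈ M) :
    M.idxOf r = ∑ y ∈ M.toFinset.erase r, (if bef M y r then 1 else 0) := by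
  induction M with
  | nil => simp at hr
  | cons c M ih =>
    obtain ⟨hcM, hMn⟩ := List.nodup_cons.1 h
    by_cases hcr : c = r
    · subst hcr
      rw [List.idxOf_cons_self]
      rw [Finset.sum_eq_zero]
      intro y _
      rw [bef_cons_head]
      simp
    · have hrM : r ∈ M := by
        rcases List.mem_cons.1 hr with h' | h'
        · exact absurd h'.symm hcr
        · exact h'
      have hcT : c ∉ M.toFinset.erase r := fun hc =>
        hcM (List.mem_toFinset.1 (Finset.mem_of_mem_erase hc))
      rw [List.idxOf_cons_ne _ hcr, List.toFinset_cons,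
        Finset.erase_insert_of_ne (fun h' => hcr h'), Finset.sum_insert hcT]
      have hbc : bef (c :: M) c r = true := by
        unfold bef
        rw [List.idxOf_cons_self, List.idxOf_cons_ne _ hcr]
        simp
      rw [hbc, if_pos rfl]
      have hcongr : ∀ y ∈ M.toFinset.erase r,
          (if bef (c :: M) y r then (1:ℕ) else 0) = (if bef M y r then 1 else 0) := by
        intro y hy
        have hyM : y ∈ M := List.mem_toFinset.1 (Finset.mem_of_mem_erase hy)
        have hyc : y ≠ c := fun h' => hcM (h' ▸ hyM)
        rw [bef_cons_ne (fun h' => hcr h'.symm) hyc]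
      rw [Finset.sum_congr rfl hcongr, ← ih hMn hrM]
      omega

lemma pot_split (T : Finset α) (LO LE LS : List α) (b : α → Bool) {r : α} (hr : r ∈ T) :
    pot T LO LE LS b
      = ∑ y ∈ T.erase r, (psiP LO LE LS b r y + psiP LO LE LS b y r)
        + ∑ x ∈ T.erase r, ∑ y ∈ (T.erase x).erase r, psiP LO LE LS b x y := by
  unfold pot
  rw [← Finset.add_sum_erase T _ hr]
  have h1 : ∀ x ∈ T.erase r, (∑ y ∈ T.erase x, psiP LO LE LS b x y)
      = psiP LO LE LS b x r + ∑ y ∈ (T.erase x).erase r, psiP LO LE LS b x y := by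
    intro x hx
    rw [← Finset.add_sum_erase (T.erase x) _
      (Finset.mem_erase.2 ⟨Ne.symm (Finset.mem_erase.1 hx).1, hr⟩)]
  rw [Finset.sum_congr rfl h1, Finset.sum_add_distrib, Finset.sum_add_distrib]
  ring

lemma pot_adjSwap (T : Finset α) (LO LE LS : List α) (b : α → Bool) (i : ℕ)
    (hSn : LS.Nodup) (hST : LS.toFinset = T) :
    pot T LO LE (adjSwap LS i) b ≤ 8 + pot T LO LE LS b := by
  rcases adjSwap_cases LS i with h | ⟨a, c, hM, hN⟩
  · rw [h]; omega
  · have hnd : (LS.take i ++ a :: c :: LS.drop (i + 2)).Nodup := hM ▸ hSn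
    have hpoint : ∀ x ∈ T, ∀ y ∈ T.erase x,
        psiP LO LE (adjSwap LS i) b x y ≤ psiP LO LE LS b x y
          + ((if x = a ∧ y = c then 4 else 0) + (if x = c ∧ y = a then 4 else 0)) := by
      intro x hx y hy
      by_cases h1 : x = a ∧ y = c
      · have := phiT_le (bef LO y x) (bef LE y x) (bef (adjSwap LS i) y x) (b x) (b y)
        rw [if_pos h1]
        unfold psiP
        omega
      · by_cases h2 : x = c ∧ y = a
        · have := phiT_le (bef LO y x) (bef LE y x) (bef (adjSwap LS i) y x) (b x) (b y)
          rw [if_pos h2]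
          unfold psiP
          omega
        · have hxL : x ∈ LS.take i ++ a :: c :: LS.drop (i + 2) := by
            rw [← hM]
            exact List.mem_toFinset.1 (hST ▸ hx)
          have hyL : y ∈ LS.take i ++ a :: c :: LS.drop (i + 2) := by
            rw [← hM]
            exact List.mem_toFinset.1 (hST ▸ (Finset.mem_of_mem_erase hy))
          have heq : bef (adjSwap LS i) y x = bef LS y x := by
            rw [hN]
            conv_rhs => rw [hM]
            exact bef_swap_other hnd hxL hyL h1 h2
          unfold psiP
          rw [heq, if_neg h1, if_neg h2]
          omega

    have hb1 : ∀ x ∈ T,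
        (∑ y ∈ T.erase x, ((if x = a ∧ y = c then (4:ℕ) else 0) + (if x = c ∧ y = a then 4 else 0)))
          ≤ (if x = a then 4 else 0) + (if x = c then 4 else 0) := by
      intro x hx
      rw [Finset.sum_add_distrib]
      have e1 : (∑ y ∈ T.erase x, (if x = a ∧ y = c then (4:ℕ) else 0)) ≤ if x = a then 4 else 0 := by
        by_cases hxa : x = a
        · rw [if_pos hxa]
          have : ∀ y, (if x = a ∧ y = c then (4:ℕ) else 0) = if y = c then 4 else 0 := by
            intro y; by_cases hyc : y = c <;> simp [hxa, hyc]
          simp only [this]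
          rw [Finset.sum_ite_eq' (T.erase x) c (fun _ => (4:ℕ))]
          split_ifs <;> omega
        · have : ∀ y, (if x = a ∧ y = c then (4:ℕ) else 0) = 0 := by
            intro y; simp [hxa]
          simp [this]
      have e2 : (∑ y ∈ T.erase x, (if x = c ∧ y = a then (4:ℕ) else 0)) ≤ if x = c then 4 else 0 := by
        by_cases hxc : x = c
        · rw [if_pos hxc]
          have : ∀ y, (if x = c ∧ y = a then (4:ℕ) else 0) = if y = a then 4 else 0 := by
            intro y; by_cases hya : y = a <;> simp [hxc, hya]
          simp only [this]
          rw [Finset.sum_ite_eq' (T.erase x) a (fun _ => (4:ℕ))]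
          split_ifs <;> omega
        · have : ∀ y, (if x = c ∧ y = a then (4:ℕ) else 0) = 0 := by
            intro y; simp [hxc]
          simp [this]
      omega
    have h1 : pot T LO LE (adjSwap LS i) b
        ≤ ∑ x ∈ T, ((∑ y ∈ T.erase x, psiP LO LE LS b x y)
            + ((if x = a then 4 else 0) + (if x = c then 4 else 0))) := by
      apply Finset.sum_le_sum
      intro x hx
      have h2 : (∑ y ∈ T.erase x, psiP LO LE (adjSwap LS i) b x y)
          ≤ ∑ y ∈ T.erase x, (psiP LO LE LS b x y
            + ((if x = a ∧ y = c then 4 else 0) + (if x = c ∧ y = a then 4 else 0))) :=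
        Finset.sum_le_sum (hpoint x hx)
      rw [Finset.sum_add_distrib] at h2
      exact h2.trans (Nat.add_le_add_left (hb1 x hx) _)
    rw [Finset.sum_add_distrib] at h1
    have h3 : (∑ x ∈ T, ((if x = a then (4:ℕ) else 0) + (if x = c then 4 else 0))) ≤ 8 := by
      rw [Finset.sum_add_distrib, Finset.sum_ite_eq' T a (fun _ => (4:ℕ)),
        Finset.sum_ite_eq' T c (fun _ => (4:ℕ))]
      split_ifs <;> omega
    unfold pot at h1 ⊢
    omega

lemma doPaid_nodup {LS : List α} (h : LS.Nodup) (ps : List ℕ) : (doPaid LS ps).Nodup := by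
  induction ps generalizing LS with
  | nil => exact h
  | cons p ps ih => exact ih (adjSwap_nodup h p)

lemma doPaid_toFinset (LS : List α) (ps : List ℕ) : (doPaid LS ps).toFinset = LS.toFinset := by
  induction ps generalizing LS with
  | nil => rfl
  | cons p ps ih =>
    have : doPaid LS (p :: ps) = doPaid (adjSwap LS p) ps := rfl
    rw [this, ih, adjSwap_toFinset]

lemma pot_doPaid (T : Finset α) (LO LE : List α) (b : α → Bool) (ps : List ℕ)
    (LS : List α) (hSn : LS.Nodup) (hST : LS.toFinset = T) :
    pot T LO LE (doPaid LS ps) b ≤ 8 * ps.length + pot T LO LE LS b := by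
  induction ps generalizing LS with
  | nil => simp [doPaid]
  | cons p ps ih =>
    have h1 : doPaid LS (p :: ps) = doPaid (adjSwap LS p) ps := rfl
    rw [h1]
    have h2 := ih (adjSwap LS p) (adjSwap_nodup hSn p) (by rw [adjSwap_toFinset]; exact hST)
    have h3 := pot_adjSwap T LO LE LS b p hSn hST
    simp only [List.length_cons]
    omega

end PotentialSteps

section MainArgument

variable {α : Type} [DecidableEq α]

lemma access_ineq (T : Finset α) (LO LE LS : List α) (b : α → Bool) (r : α) (j : ℕ)
    (hOn : LO.Nodup) (hEn : LE.Nodup) (hSn : LS.Nodup)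
    (hOT : LO.toFinset = T) (hET : LE.toFinset = T) (hST : LS.toFinset = T)
    (hr : r ∈ T) :
    2 * (LO.idxOf r + 1) + 2 * (LE.idxOf r + 1)
      + pot T (if b r = true then r :: LO.erase r else LO)
          (if b r = true then LE else r :: LE.erase r)
          (freeMove LS r j) (Function.update b r (!b r))
    ≤ 8 * (LS.idxOf r + 1) + pot T LO LE LS b := by
  set LO' := if b r = true then r :: LO.erase r else LO with hLO'
  set LE' := if b r = true then LE else r :: LE.erase r with hLE'
  set S2 := freeMove LS r j with hS2
  set b' := Function.update b r (!b r) with hb'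
  have hrO : r ∈ LO := by rw [← List.mem_toFinset, hOT]; exact hr
  have hrE : r ∈ LE := by rw [← List.mem_toFinset, hET]; exact hr
  have hrS : r ∈ LS := by rw [← List.mem_toFinset, hST]; exact hr
  have hO'n : LO'.Nodup := by rw [hLO']; split_ifs; exacts [mtf_nodup hOn, hOn]
  have hE'n : LE'.Nodup := by rw [hLE']; split_ifs; exacts [hEn, mtf_nodup hEn]
  have hS2n : S2.Nodup := freeMove_nodup hSn hrS j
  have hO'T : LO'.toFinset = T := by
    rw [hLO']; split_ifs
    · rw [mtf_toFinset hrO]; exact hOT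
    · exact hOT
  have hE'T : LE'.toFinset = T := by
    rw [hLE']; split_ifs
    · exact hET
    · rw [mtf_toFinset hrE]; exact hET
  have hS2T : S2.toFinset = T := by rw [hS2, freeMove_toFinset hSn hrS]; exact hST
  have hbefO' : ∀ y, bef LO' y r = (if b r = true then false else bef LO y r) := by
    intro y; rw [hLO']; split_ifs
    · exact bef_cons_head _ _ _
    · rfl
  have hbefE' : ∀ y, bef LE' y r = (if b r = true then bef LE y r else false) := by
    intro y; rw [hLE']; split_ifs
    · rfl
    · exact bef_cons_head _ _ _
  have hbefO'o : ∀ x y, x ≠ r → y ≠ r → bef LO' y x = bef LO y x := by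
    intro x y hx hy; rw [hLO']; split_ifs
    · exact bef_mtf_other hx hy
    · rfl
  have hbefE'o : ∀ x y, x ≠ r → y ≠ r → bef LE' y x = bef LE y x := by
    intro x y hx hy; rw [hLE']; split_ifs
    · rfl
    · exact bef_mtf_other hx hy
  have key : ∀ y ∈ T.erase r,
      2 * (if bef LO y r then 1 else 0) + 2 * (if bef LE y r then 1 else 0)
        + (psiP LO' LE' S2 b' r y + psiP LO' LE' S2 b' y r)
      ≤ 8 * (if bef LS y r then 1 else 0)
        + (psiP LO LE LS b r y + psiP LO LE LS b y r) := by
    intro y hy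
    obtain ⟨hyr, hyT⟩ := Finset.mem_erase.1 hy
    have hyO : y ∈ LO := by rw [← List.mem_toFinset, hOT]; exact hyT
    have hyE : y ∈ LE := by rw [← List.mem_toFinset, hET]; exact hyT
    have hyS : y ∈ LS := by rw [← List.mem_toFinset, hST]; exact hyT
    have hyO' : y ∈ LO' := by rw [← List.mem_toFinset, hO'T]; exact hyT
    have hyE' : y ∈ LE' := by rw [← List.mem_toFinset, hE'T]; exact hyT
    have hyS2 : y ∈ S2 := by rw [← List.mem_toFinset, hS2T]; exact hyT
    have hrO' : r ∈ LO' := by rw [← List.mem_toFinset, hO'T]; exact hr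
    have hrE' : r ∈ LE' := by rw [← List.mem_toFinset, hE'T]; exact hr
    have hrS2 : r ∈ S2 := by rw [← List.mem_toFinset, hS2T]; exact hr
    unfold psiP
    rw [bef_not hO'n hrO' hyO' (Ne.symm hyr), bef_not hE'n hrE' hyE' (Ne.symm hyr),
      bef_not hS2n hrS2 hyS2 (Ne.symm hyr),
      bef_not hOn hrO hyO (Ne.symm hyr), bef_not hEn hrE hyE (Ne.symm hyr),
      bef_not hSn hrS hyS (Ne.symm hyr),
      hbefO' y, hbefE' y, hb']
    rw [Function.update_self, Function.update_of_ne hyr]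
    have := phiT_step (bef LO y r) (bef LE y r) (bef LS y r) (b r) (b y) (bef S2 y r)
      (bef_freeMove_req hSn hrS hyS hyr j)
    omega
  have hRR : ∑ x ∈ T.erase r, ∑ y ∈ (T.erase x).erase r, psiP LO' LE' S2 b' x y
      = ∑ x ∈ T.erase r, ∑ y ∈ (T.erase x).erase r, psiP LO LE LS b x y := by
    refine Finset.sum_congr rfl fun x hx => Finset.sum_congr rfl fun y hy => ?_
    obtain ⟨hxr, hxT⟩ := Finset.mem_erase.1 hx
    obtain ⟨hyr, hy2⟩ := Finset.mem_erase.1 hy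
    have hyT : y ∈ T := Finset.mem_of_mem_erase hy2
    have hxS : x ∈ LS := by rw [← List.mem_toFinset, hST]; exact hxT
    have hyS : y ∈ LS := by rw [← List.mem_toFinset, hST]; exact hyT
    unfold psiP
    rw [hbefO'o x y hxr hyr, hbefE'o x y hxr hyr,
      hS2, bef_freeMove_other hSn hrS hxS hyS hxr hyr j, hb',
      Function.update_of_ne hxr, Function.update_of_ne hyr]
  have eO : LO.idxOf r = ∑ y ∈ T.erase r, (if bef LO y r then 1 else 0) := by
    rw [← hOT]; exact indexOf_eq_sum hOn hrO
  have eE : LE.idxOf r = ∑ y ∈ T.erase r, (if bef LE y r then 1 else 0) := by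
    rw [← hET]; exact indexOf_eq_sum hEn hrE
  have eS : LS.idxOf r = ∑ y ∈ T.erase r, (if bef LS y r then 1 else 0) := by
    rw [← hST]; exact indexOf_eq_sum hSn hrS
  have hsum2 : 2 * LO.idxOf r + 2 * LE.idxOf r
      + ∑ y ∈ T.erase r, (psiP LO' LE' S2 b' r y + psiP LO' LE' S2 b' y r)
      ≤ 8 * LS.idxOf r
      + ∑ y ∈ T.erase r, (psiP LO LE LS b r y + psiP LO LE LS b y r) := by
    calc 2 * LO.idxOf r + 2 * LE.idxOf r
          + ∑ y ∈ T.erase r, (psiP LO' LE' S2 b' r y + psiP LO' LE' S2 b' y r)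
        = ∑ y ∈ T.erase r, (2 * (if bef LO y r then 1 else 0)
            + 2 * (if bef LE y r then 1 else 0)
            + (psiP LO' LE' S2 b' r y + psiP LO' LE' S2 b' y r)) := by
          rw [eO, eE, Finset.mul_sum, Finset.mul_sum, ← Finset.sum_add_distrib,
            ← Finset.sum_add_distrib]
      _ ≤ ∑ y ∈ T.erase r, (8 * (if bef LS y r then 1 else 0)
            + (psiP LO LE LS b r y + psiP LO LE LS b y r)) := Finset.sum_le_sum key
      _ = 8 * LS.idxOf r
            + ∑ y ∈ T.erase r, (psiP LO LE LS b r y + psiP LO LE LS b y r) := by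
          rw [eS, Finset.mul_sum, ← Finset.sum_add_distrib]
  rw [pot_split T LO' LE' S2 b' hr, pot_split T LO LE LS b hr, hRR]
  omega

lemma step_ineq (T : Finset α) (LO LE LS : List α) (b : α → Bool) (r : α) (a : Action α)
    (hOn : LO.Nodup) (hEn : LE.Nodup) (hSn : LS.Nodup)
    (hOT : LO.toFinset = T) (hET : LE.toFinset = T) (hST : LS.toFinset = T)
    (hr : r ∈ T) :
    2 * (LO.idxOf r + 1) + 2 * (LE.idxOf r + 1)
      + pot T (if b r = true then r :: LO.erase r else LO)
          (if b r = true then LE else r :: LE.erase r)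
          (stepList LS r a) (Function.update b r (!b r))
    ≤ 8 * stepCost 1 LS r a + pot T LO LE LS b := by
  have hSn1 := doPaid_nodup hSn a.paid
  have hST1 : (doPaid LS a.paid).toFinset = T := by rw [doPaid_toFinset]; exact hST
  have h1 := access_ineq T LO LE (doPaid LS a.paid) b r a.target hOn hEn hSn1 hOT hET hST1 hr
  have h2 := pot_doPaid T LO LE b a.paid LS hSn hST
  have hsc : stepCost 1 LS r a = a.paid.length + ((doPaid LS a.paid).idxOf r + 1) := rfl
  have hsl : stepList LS r a = freeMove (doPaid LS a.paid) r a.target := rfl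
  rw [hsl, hsc]
  omega

lemma stepList_nodup {LS : List α} (hSn : LS.Nodup) {r : α} (hrS : r ∈ LS) (a : Action α) :
    (stepList LS r a).Nodup := by
  have hmem : r ∈ doPaid LS a.paid := by
    rw [← List.mem_toFinset, doPaid_toFinset]
    exact List.mem_toFinset.2 hrS
  exact freeMove_nodup (doPaid_nodup hSn a.paid) hmem a.target

lemma stepList_toFinset {LS : List α} (hSn : LS.Nodup) {r : α} (hrS : r ∈ LS) (a : Action α) :
    (stepList LS r a).toFinset = LS.toFinset := by
  have hmem : r ∈ doPaid LS a.paid := by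
    rw [← List.mem_toFinset, doPaid_toFinset]
    exact List.mem_toFinset.2 hrS
  have : stepList LS r a = freeMove (doPaid LS a.paid) r a.target := rfl
  rw [this, freeMove_toFinset (doPaid_nodup hSn a.paid) hmem, doPaid_toFinset]

lemma main_ineq (σ : List α) : ∀ (as : List (Action α)) (T : Finset α)
    (LO LE LS : List α) (b : α → Bool),
    as.length = σ.length →
    LO.Nodup → LE.Nodup → LS.Nodup →
    LO.toFinset = T → LE.toFinset = T → LS.toFinset = T →
    (∀ x ∈ σ, x ∈ T) →
    2 * mtf2Cost 1 b LO σ + 2 * mtf2Cost 1 (fun z => !b z) LE σ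
      ≤ 8 * serveCost 1 LS σ as + pot T LO LE LS b := by
  induction σ with
  | nil =>
    intro as T LO LE LS b _ _ _ _ _ _ _ _
    simp [mtf2Cost]
  | cons r σ ih =>
    intro as T LO LE LS b hlen hOn hEn hSn hOT hET hST hmem
    cases as with
    | nil => simp at hlen
    | cons a as =>
      have hr : r ∈ T := hmem r (by simp)
      have hrO : r ∈ LO := by rw [← List.mem_toFinset, hOT]; exact hr
      have hrE : r ∈ LE := by rw [← List.mem_toFinset, hET]; exact hr
      have hrS : r ∈ LS := by rw [← List.mem_toFinset, hST]; exact hr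
      have eqO : mtf2Cost 1 b LO (r :: σ)
          = (LO.idxOf r + 1) + mtf2Cost 1 (Function.update b r (!b r))
              (if !b r then LO else r :: LO.erase r) σ := rfl
      have eqE : mtf2Cost 1 (fun z => !b z) LE (r :: σ)
          = (LE.idxOf r + 1) + mtf2Cost 1 (Function.update (fun z => !b z) r (!(!b r)))
              (if !(!b r) then LE else r :: LE.erase r) σ := rfl
      have eqS : serveCost 1 LS (r :: σ) (a :: as)
          = stepCost 1 LS r a + serveCost 1 (stepList LS r a) σ as := rfl
      have hOl : (if !b r then LO else r :: LO.erase r)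
          = (if b r = true then r :: LO.erase r else LO) := by
        cases b r <;> simp
      have hEl : (if !(!b r) then LE else r :: LE.erase r)
          = (if b r = true then LE else r :: LE.erase r) := by
        cases b r <;> simp
      have hbE : (Function.update (fun z => !b z) r (!(!b r)))
          = (fun z => !(Function.update b r (!b r) z)) := by
        funext z
        by_cases hz : z = r
        · subst hz; simp
        · simp [Function.update_of_ne hz]
      set LO' := if b r = true then r :: LO.erase r else LO with hLO'
      set LE' := if b r = true then LE else r :: LE.erase r with hLE'
      set b' := Function.update b r (!b r) with hb'
      have eqO' : mtf2Cost 1 b LO (r :: σ) = (LO.idxOf r + 1) + mtf2Cost 1 b' LO' σ := by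
        rw [eqO, hOl]
      have eqE' : mtf2Cost 1 (fun z => !b z) LE (r :: σ)
          = (LE.idxOf r + 1) + mtf2Cost 1 (fun z => !b' z) LE' σ := by
        rw [eqE, hEl, hbE]
      have hO'n : LO'.Nodup := by rw [hLO']; split_ifs; exacts [mtf_nodup hOn, hOn]
      have hE'n : LE'.Nodup := by rw [hLE']; split_ifs; exacts [hEn, mtf_nodup hEn]
      have hO'T : LO'.toFinset = T := by
        rw [hLO']; split_ifs
        · rw [mtf_toFinset hrO]; exact hOT
        · exact hOT
      have hE'T : LE'.toFinset = T := by
        rw [hLE']; split_ifs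
        · exact hET
        · rw [mtf_toFinset hrE]; exact hET
      have hIH := ih as T LO' LE' (stepList LS r a) b' (by simpa using hlen)
        hO'n hE'n (stepList_nodup hSn hrS a) hO'T hE'T
        (by rw [stepList_toFinset hSn hrS a]; exact hST)
        (fun x hx => hmem x (by simp [hx]))
      have hstep := step_ineq T LO LE LS b r a hOn hEn hSn hOT hET hST hr
      rw [← hLO', ← hLE', ← hb'] at hstep
      rw [eqO', eqE', eqS]
      omega

end MainArgument


/-- For every initial list and every request sequence, under the full cost model,
`min(MTFO(σ), MTFE(σ)) ≤ 2·OPT(σ)`. -/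
theorem min_mtfo_mtfe_le_two_opt {α : Type} [DecidableEq α]
    (L : List α) (hL : L.Nodup) (σ : List α) (hσ : ∀ r ∈ σ, r ∈ L) :
    min (mtfoCost 1 L σ) (mtfeCost 1 L σ) ≤ 2 * optCost 1 L σ := by
  have h0 : pot L.toFinset L L L (fun _ => true) = 0 := by
    unfold pot
    refine Finset.sum_eq_zero fun x hx => Finset.sum_eq_zero fun y hy => ?_
    unfold psiP
    exact phiT_diag _ _ _
  have key : ∀ as : List (Action α), as.length = σ.length →
      2 * mtfoCost 1 L σ + 2 * mtfeCost 1 L σ ≤ 8 * serveCost 1 L σ as := by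
    intro as hlen
    have h := main_ineq σ as L.toFinset L L L (fun _ => true) hlen hL hL hL rfl rfl rfl
      (fun x hx => List.mem_toFinset.2 (hσ x hx))
    rw [h0] at h
    have h' : 2 * mtf2Cost 1 (fun _ : α => true) L σ
        + 2 * mtf2Cost 1 (fun _ : α => false) L σ ≤ 8 * serveCost 1 L σ as + 0 := h
    unfold mtfoCost mtfeCost
    omega
  have hne : {n | ∃ as : List (Action α), as.length = σ.length ∧ serveCost 1 L σ as = n}.Nonempty :=
    ⟨serveCost 1 L σ (σ.map fun _ => ⟨[], 0⟩), ⟨σ.map fun _ => ⟨[], 0⟩, by simp, rfl⟩⟩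
  obtain ⟨as, hlen, hval⟩ := Nat.sInf_mem hne
  have h := key as hlen
  rw [hval] at h
  unfold optCost
  omega
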